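/- A finitely generated virtually nilpotent group has at most polynomial growth. -/

import Mathlib

namespace PolyGrowth

open scoped commutatorElement

inductive FC (α : Type*)
  | of : α → FC α
  | comm : FC α → FC α → FC α
deriving DecidableEq

namespace FC

variable {α : Type*} {G : Type*} [Group G]

def wt : FC α → ℕ
  | of _ => 1
  | comm x y => max x.wt y.wt + 1

lemma wt_pos (t : FC α) : 1 ≤ t.wt := by
  cases t <;> simp [wt]

def ev (f : α → G) : FC α → G
  | of a => f a
  | comm x y => ⁅x.ev f, y.ev f⁆

lemma ev_mem (f : α → G) : ∀ t : FC α, t.ev f ∈ (⊤ : Subgroup G).lowerCentralSeries (t.wt - 1)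
  | of a => by simp [ev, wt, lowerCentralSeries_zero]
  | comm x y => by
      have hx := ev_mem f x
      have hy := ev_mem f y
      have hw : (comm x y).wt - 1 = max x.wt y.wt := by simp [wt]
      simp only [ev]
      rw [hw]
      rcases le_total y.wt x.wt with h | h
      · have hmax : max x.wt y.wt = (x.wt - 1) + 1 := by
          have := x.wt_pos; omega
        rw [hmax, lowerCentralSeries_succ]
        exact Subgroup.commutator_mem_commutator hx (Subgroup.mem_top _)
      · have hmax : max x.wt y.wt = (y.wt - 1) + 1 := by
          have := y.wt_pos; omega
        rw [hmax, lowerCentralSeries_succ]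
        have hmem : (⁅y.ev f, x.ev f⁆ : G) ∈
            ⁅(⊤ : Subgroup G).lowerCentralSeries (y.wt - 1), (⊤ : Subgroup G)⁆ :=
          Subgroup.commutator_mem_commutator hy (Subgroup.mem_top _)
        have hcomm : (⁅x.ev f, y.ev f⁆ : G) = ⁅y.ev f, x.ev f⁆⁻¹ :=
          (commutatorElement_inv (y.ev f) (x.ev f)).symm
        rw [hcomm]
        exact inv_mem hmem

lemma ev_eq_one (f : α → G) {c : ℕ} (hbot : (⊤ : Subgroup G).lowerCentralSeries c = ⊥)
    {t : FC α} (h : c < t.wt) : t.ev f = 1 := by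
  have h1 := ev_mem f t
  have h2 : (⊤ : Subgroup G).lowerCentralSeries (t.wt - 1) ≤ (⊤ : Subgroup G).lowerCentralSeries c :=
    lowerCentralSeries_antitone _ (by omega)
  have h3 := h2 h1
  rwa [hbot, Subgroup.mem_bot] at h3

end FC


open FC

set_option linter.unusedSectionVars false

section Machinery

variable {α : Type*} {G : Type*} [Group G] [DecidableEq α]

/-- count of letters of weight `≤ w` -/
def cntLe (w : ℕ) (l : List (FC α)) : ℕ := l.countP (fun z => decide (z.wt ≤ w))

@[simp] lemma cntLe_nil (w : ℕ) : cntLe w ([] : List (FC α)) = 0 := rfl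

lemma cntLe_cons (w : ℕ) (y : FC α) (l : List (FC α)) :
    cntLe w (y :: l) = cntLe w l + if y.wt ≤ w then 1 else 0 := by
  simp [cntLe, List.countP_cons]

lemma cntLe_zero (l : List (FC α)) : cntLe 0 l = 0 := by
  induction l with
  | nil => rfl
  | cons y l ih =>
      rw [cntLe_cons, ih]
      have := y.wt_pos
      simp; omega

lemma cntLe_mono {w w' : ℕ} (h : w ≤ w') (l : List (FC α)) : cntLe w l ≤ cntLe w' l := by
  induction l with
  | nil => simp
  | cons y l ih =>
      rw [cntLe_cons, cntLe_cons]
      split_ifs with h1 h2 h2 <;> omega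

lemma cntLe_le_length (w : ℕ) (l : List (FC α)) : cntLe w l ≤ l.length :=
  List.countP_le_length

lemma cntLe_eq_length {c : ℕ} {l : List (FC α)} (h : ∀ z ∈ l, z.wt ≤ c) :
    cntLe c l = l.length := by
  apply List.countP_eq_length.mpr
  intro a ha
  simpa using h a ha

variable (c : ℕ)

def bindStep (t : FC α) : List (FC α) → List (FC α)
  | [] => []
  | z :: l => (if (comm t z).wt ≤ c then [comm t z, z] else [z]) ++ bindStep t l

def phase (t : FC α) : List (FC α) → List (FC α) × ℕ
  | [] => ([], 0)
  | y :: l =>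
      if y = t then (bindStep c t (phase t l).1, (phase t l).2 + 1)
      else (y :: (phase t l).1, (phase t l).2)

variable {f : α → G}

lemma bindStep_prod (hbot : (⊤ : Subgroup G).lowerCentralSeries c = ⊥) (t : FC α) (l : List (FC α)) :
    ((bindStep c t l).map (ev f)).prod * t.ev f = t.ev f * (l.map (ev f)).prod := by
  induction l with
  | nil => simp [bindStep]
  | cons z l ih =>
      rw [bindStep]
      split_ifs with h
      · simp only [List.map_append, List.map_cons, List.map_nil, List.prod_append,
          List.prod_cons, List.prod_nil, mul_one, ev]
        calc ⁅t.ev f, z.ev f⁆ * z.ev f * ((bindStep c t l).map (ev f)).prod * t.ev f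
            = ⁅t.ev f, z.ev f⁆ * z.ev f * (((bindStep c t l).map (ev f)).prod * t.ev f) := by
              group
          _ = ⁅t.ev f, z.ev f⁆ * z.ev f * (t.ev f * (l.map (ev f)).prod) := by rw [ih]
          _ = t.ev f * (z.ev f * (l.map (ev f)).prod) := by
              rw [commutatorElement_def]; group
      · simp only [List.map_append, List.map_cons, List.map_nil, List.prod_append,
          List.prod_cons, List.prod_nil, mul_one]
        have hone : (⁅t.ev f, z.ev f⁆ : G) = 1 := by
          have h2 : (comm t z).ev f = 1 := ev_eq_one f hbot (by omega)
          simpa [ev] using h2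
        have hcomm : t.ev f * z.ev f = z.ev f * t.ev f :=
          commutatorElement_eq_one_iff_mul_comm.mp hone
        calc z.ev f * ((bindStep c t l).map (ev f)).prod * t.ev f
            = z.ev f * (((bindStep c t l).map (ev f)).prod * t.ev f) := by
              rw [mul_assoc]
          _ = z.ev f * (t.ev f * (l.map (ev f)).prod) := by rw [ih]
          _ = t.ev f * (z.ev f * (l.map (ev f)).prod) := by
              rw [← mul_assoc, ← hcomm, mul_assoc]

lemma phase_prod (hbot : (⊤ : Subgroup G).lowerCentralSeries c = ⊥) (t : FC α) (l : List (FC α)) :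
    ((phase c t l).1.map (ev f)).prod * (t.ev f) ^ (phase c t l).2 = (l.map (ev f)).prod := by
  induction l with
  | nil => simp [phase]
  | cons y l ih =>
      rw [phase]
      split_ifs with h
      · subst h
        simp only [List.map_cons, List.prod_cons]
        rw [pow_succ']
        calc ((bindStep c y (phase c y l).1).map (ev f)).prod *
              (y.ev f * y.ev f ^ (phase c y l).2)
            = (((bindStep c y (phase c y l).1).map (ev f)).prod * y.ev f) *
              y.ev f ^ (phase c y l).2 := by rw [mul_assoc]
          _ = (y.ev f * ((phase c y l).1.map (ev f)).prod) * y.ev f ^ (phase c y l).2 := by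
              rw [bindStep_prod c hbot]
          _ = y.ev f * (((phase c y l).1.map (ev f)).prod * y.ev f ^ (phase c y l).2) := by
              rw [mul_assoc]
          _ = y.ev f * (l.map (ev f)).prod := by rw [ih]
      · simp only [List.map_cons, List.prod_cons, mul_assoc, ih]


lemma bindStep_mem (t : FC α) (l : List (FC α)) :
    ∀ z' ∈ bindStep c t l, z' ∈ l ∨ ∃ z ∈ l, z' = comm t z ∧ z'.wt ≤ c := by
  induction l with
  | nil => simp [bindStep]
  | cons z l ih =>
      intro z' hz'
      rw [bindStep, List.mem_append] at hz'
      rcases hz' with hz' | hz'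
      · split_ifs at hz' with h
        · simp only [List.mem_cons, List.not_mem_nil, or_false] at hz'
          rcases hz' with h1 | h1
          · exact Or.inr ⟨z, List.mem_cons_self .., by simp_all⟩
          · exact Or.inl (by simp [h1])
        · simp only [List.mem_cons, List.not_mem_nil, or_false] at hz'
          exact Or.inl (by simp [hz'])
      · rcases ih z' hz' with h1 | ⟨z0, hz0, h2, h3⟩
        · exact Or.inl (List.mem_cons_of_mem _ h1)
        · exact Or.inr ⟨z0, List.mem_cons_of_mem _ hz0, h2, h3⟩

lemma phase_fst_mem (t : FC α) (l : List (FC α)) :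
    ∀ z ∈ (phase c t l).1,
      (z ∈ l ∧ z ≠ t) ∨ (∃ z₀, z = comm t z₀ ∧ z.wt ≤ c ∧ t.wt < z.wt) := by
  induction l with
  | nil => simp [phase]
  | cons y l ih =>
      intro z hz
      rw [phase] at hz
      split_ifs at hz with h
      · rcases bindStep_mem c t (phase c t l).1 z hz with h1 | ⟨z0, _, h2, h3⟩
        · rcases ih z h1 with ⟨h2, h3⟩ | h2
          · exact Or.inl ⟨List.mem_cons_of_mem _ h2, h3⟩
          · exact Or.inr h2
        · refine Or.inr ⟨z0, h2, h3, ?_⟩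
          rw [h2, wt]
          have := le_max_left t.wt z0.wt
          omega
      · simp only [List.mem_cons] at hz
        rcases hz with hz | hz
        · exact Or.inl ⟨by simp [hz], by rw [hz]; exact h⟩
        · rcases ih z hz with ⟨h2, h3⟩ | h2
          · exact Or.inl ⟨List.mem_cons_of_mem _ h2, h3⟩
          · exact Or.inr h2

lemma phase_wt {t : FC α} {l : List (FC α)} (h : ∀ z ∈ l, z.wt ≤ c) :
    ∀ z ∈ (phase c t l).1, z.wt ≤ c := by
  intro z hz
  rcases phase_fst_mem c t l z hz with ⟨h1, _⟩ | ⟨_, _, h1, _⟩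
  · exact h z h1
  · exact h1

lemma phase_snd_le (t : FC α) (l : List (FC α)) : (phase c t l).2 ≤ l.length := by
  induction l with
  | nil => simp [phase]
  | cons y l ih =>
      rw [phase]
      split_ifs <;> simp <;> omega

lemma cntLe_bindStep (t : FC α) (l : List (FC α)) (w : ℕ) :
    cntLe w (bindStep c t l) ≤ cntLe w l + cntLe (w - 1) l := by
  induction l with
  | nil => simp [bindStep]
  | cons z l ih =>
      rw [bindStep]
      have hcnt : cntLe w ((if (comm t z).wt ≤ c then [comm t z, z] else [z]) ++ bindStep c t l)
          = cntLe w (if (comm t z).wt ≤ c then [comm t z, z] else [z]) + cntLe w (bindStep c t l) := by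
        simp [cntLe, List.countP_append]
      rw [hcnt, cntLe_cons, cntLe_cons]
      have hkey : cntLe w (if (comm t z).wt ≤ c then [comm t z, z] else [z]) ≤
          (if z.wt ≤ w then 1 else 0) + (if z.wt ≤ w - 1 then 1 else 0) := by
        have hwc : (comm t z).wt = max t.wt z.wt + 1 := rfl
        split_ifs with h1 <;>
          simp only [cntLe, List.countP_cons, List.countP_nil] <;>
          split_ifs <;> simp_all <;> omega
      omega

lemma pow_add_pred {X v : ℕ} (hX : 1 ≤ X) (hv : 1 ≤ v) :
    X ^ v + X ^ (v - 1) ≤ (X + 1) ^ v := by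
  obtain ⟨u, rfl⟩ : ∃ u, v = u + 1 := ⟨v - 1, by omega⟩
  simp only [Nat.add_sub_cancel]
  calc X ^ (u + 1) + X ^ u = X ^ u * (X + 1) := by ring
    _ ≤ (X + 1) ^ u * (X + 1) := by
        exact Nat.mul_le_mul_right _ (Nat.pow_le_pow_left (by omega) u)
    _ = (X + 1) ^ (u + 1) := by ring

lemma phase_cnt (t : FC α) (l : List (FC α)) :
    ∀ w : ℕ, cntLe w (phase c t l).1 ≤ cntLe w l * ((phase c t l).2 + 1) ^ (w - 1) := by
  induction l with
  | nil => intro w; simp [phase]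
  | cons y l ih =>
      intro w
      rcases Nat.eq_zero_or_pos w with rfl | hw
      · simp [cntLe_zero]
      rw [phase]
      split_ifs with h
      · -- hit
        simp only
        have h1 := cntLe_bindStep c t (phase c t l).1 w
        have h2 := ih w
        have h3 := ih (w - 1)
        set k := (phase c t l).2 with hk
        have hmono : cntLe (w-1) l ≤ cntLe w l := cntLe_mono (by omega) l
        have hcons : cntLe w l ≤ cntLe w (y :: l) := by rw [cntLe_cons]; omega
        rcases Nat.lt_or_ge w 2 with hw2 | hw2
        · -- w = 1
          have hw1 : w = 1 := by omega
          subst hw1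
          simp only [Nat.sub_self, pow_zero, Nat.zero_sub] at *
          have h0 : cntLe 0 (phase c t l).1 = 0 := cntLe_zero _
          calc cntLe 1 (bindStep c t (phase c t l).1) ≤ cntLe 1 (phase c t l).1 + 0 := by
                omega
            _ ≤ cntLe 1 l * 1 := by simpa using h2
            _ ≤ cntLe 1 (y :: l) * (k + 1 + 1) ^ (1 - 1) := by simpa using hcons
        · -- w ≥ 2
          have hpow : (k+1) ^ (w-1) + (k+1) ^ (w-1-1) ≤ (k+2) ^ (w-1) := by
            have := pow_add_pred (X := k+1) (v := w-1) (by omega) (by omega)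
            simpa [show k+1+1 = k+2 by omega] using this
          have hww : w - 1 - 1 = w - 2 := by omega
          calc cntLe w (bindStep c t (phase c t l).1)
              ≤ cntLe w (phase c t l).1 + cntLe (w-1) (phase c t l).1 := h1
            _ ≤ cntLe w l * (k+1)^(w-1) + cntLe (w-1) l * (k+1)^(w-1-1) := by
                rw [hww]; exact Nat.add_le_add h2 (by simpa [hww] using h3)
            _ ≤ cntLe w l * (k+1)^(w-1) + cntLe w l * (k+1)^(w-1-1) := by
                have := Nat.mul_le_mul_right ((k+1)^(w-1-1)) hmono
                omega
            _ = cntLe w l * ((k+1)^(w-1) + (k+1)^(w-1-1)) := by ring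
            _ ≤ cntLe w l * (k+2)^(w-1) := Nat.mul_le_mul_left _ hpow
            _ ≤ cntLe w (y :: l) * (k+1+1)^(w-1) := by
                have : (k:ℕ)+2 = k+1+1 := by omega
                rw [this] at *
                exact Nat.mul_le_mul_right _ hcons
      · -- miss
        simp only
        rw [cntLe_cons, cntLe_cons]
        have h2 := ih w
        have hpow1 : 1 ≤ ((phase c t l).2 + 1) ^ (w - 1) := Nat.one_le_pow _ _ (by omega)
        split_ifs with hy
        · calc cntLe w (phase c t l).1 + 1
              ≤ cntLe w l * ((phase c t l).2 + 1)^(w-1) + 1 * ((phase c t l).2 + 1)^(w-1) := by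
                have := hpow1; omega
            _ = (cntLe w l + 1) * ((phase c t l).2 + 1)^(w-1) := by ring
        · simpa using h2

lemma phase_len (hc : 1 ≤ c) {t : FC α} {l : List (FC α)} (h : ∀ z ∈ l, z.wt ≤ c) :
    (phase c t l).1.length ≤ (l.length + c + 2) ^ (c + 1) := by
  have h1 : cntLe c (phase c t l).1 = (phase c t l).1.length :=
    cntLe_eq_length (phase_wt c h)
  have h2 := phase_cnt c t l c
  rw [h1, cntLe_eq_length h] at h2
  have h3 : (phase c t l).2 + 1 ≤ l.length + 1 := by
    have := phase_snd_le c t l; omega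
  calc (phase c t l).1.length ≤ l.length * ((phase c t l).2 + 1) ^ (c-1) := h2
    _ ≤ (l.length + c + 2) * (l.length + c + 2) ^ (c-1) := by
        apply Nat.mul_le_mul (by omega)
        exact Nat.pow_le_pow_left (by omega) _
    _ = (l.length + c + 2) ^ (c-1+1) := by rw [pow_succ]; ring
    _ ≤ (l.length + c + 2) ^ (c+1) := Nat.pow_le_pow_right (by omega) (by omega)


def process : List (FC α) → List (FC α) → List (FC α) × List ℕ
  | [], l => (l, [])
  | t :: ts, l =>
      ((process ts (phase c t l).1).1, (phase c t l).2 :: (process ts (phase c t l).1).2)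

def piRec (f : α → G) : List (FC α) → List ℕ → G
  | t :: ts, k :: ks => piRec f ts ks * (t.ev f) ^ k
  | _, _ => 1

lemma process_prod (hbot : (⊤ : Subgroup G).lowerCentralSeries c = ⊥) :
    ∀ (ts : List (FC α)) (l : List (FC α)),
      ((process c ts l).1.map (ev f)).prod * piRec f ts (process c ts l).2
        = (l.map (ev f)).prod := by
  intro ts
  induction ts with
  | nil => intro l; simp [process, piRec]
  | cons t ts ih =>
      intro l
      rw [process]
      simp only [piRec]
      rw [← mul_assoc, ih ((phase c t l).1), phase_prod c hbot]

lemma process_ks_length (ts : List (FC α)) (l : List (FC α)) :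
    (process c ts l).2.length = ts.length := by
  induction ts generalizing l with
  | nil => simp [process]
  | cons t ts ih => simp [process, ih]

/-- everything of weight bigger than the head is in the tail -/
def Good : List (FC α) → Prop
  | [] => True
  | t :: ts => (∀ z : FC α, z.wt ≤ c → t.wt < z.wt → z ∈ ts) ∧ Good ts

lemma good_of_sorted :
    ∀ ts : List (FC α), List.Pairwise (fun a b : FC α => a.wt ≤ b.wt) ts →
      (∀ z : FC α, z.wt ≤ c → (∃ t₀ ∈ ts, t₀.wt < z.wt) → z ∈ ts) → Good c ts := by
  intro ts
  induction ts with
  | nil => intro _ _; trivial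
  | cons t ts ih =>
      intro hp hcl
      rw [List.pairwise_cons] at hp
      constructor
      · intro z h1 h2
        have hz : z ∈ t :: ts := hcl z h1 ⟨t, List.mem_cons_self .., h2⟩
        rcases List.mem_cons.mp hz with rfl | hz
        · omega
        · exact hz
      · apply ih hp.2
        intro z h1 ⟨t₀, ht₀, hlt⟩
        have hz : z ∈ t :: ts := hcl z h1 ⟨t₀, List.mem_cons_of_mem _ ht₀, hlt⟩
        rcases List.mem_cons.mp hz with rfl | hz
        · have := hp.1 t₀ ht₀
          omega
        · exact hz

lemma process_clean :
    ∀ (ts : List (FC α)) (l : List (FC α)), Good c ts → (∀ z ∈ l, z ∈ ts) →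
      (∀ z ∈ l, z.wt ≤ c) → (process c ts l).1 = [] := by
  intro ts
  induction ts with
  | nil =>
      intro l _ hmem _
      have : l = [] := List.eq_nil_iff_forall_not_mem.mpr fun a ha => by
        simpa using hmem a ha
      simp [process, this]
  | cons t ts ih =>
      intro l hgood hmem hwt
      rw [process]
      simp only
      apply ih
      · exact hgood.2
      · intro z hz
        rcases phase_fst_mem c t l z hz with ⟨h1, h2⟩ | ⟨z₀, _, h2, h3⟩
        · rcases List.mem_cons.mp (hmem z h1) with rfl | h
          · exact absurd rfl h2
          · exact h
        · exact hgood.1 z h2 h3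
      · exact phase_wt c hwt

lemma process_bound (hc : 1 ≤ c) :
    ∀ (ts : List (FC α)) (l : List (FC α)), (∀ z ∈ l, z.wt ≤ c) →
      (∀ k ∈ (process c ts l).2,
        k ≤ (fun n => (n + c + 2) ^ (c+1))^[ts.length] l.length) := by
  intro ts
  induction ts with
  | nil => intro l _ k hk; simp [process] at hk
  | cons t ts ih =>
      intro l hwt k hk
      set F1 : ℕ → ℕ := fun n => (n + c + 2) ^ (c+1) with hF1
      have hF1mono : Monotone F1 := by
        intro a b hab
        exact Nat.pow_le_pow_left (by omega) _
      have hle : ∀ n, n ≤ F1 n := by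
        intro n
        calc n ≤ n + c + 2 := by omega
          _ = (n + c + 2) ^ 1 := (pow_one _).symm
          _ ≤ (n + c + 2) ^ (c+1) := Nat.pow_le_pow_right (by omega) (by omega)
      have hitermono : ∀ i, Monotone (F1^[i]) := fun i => hF1mono.iterate i
      have hleiter : ∀ i n, n ≤ F1^[i] n := by
        intro i
        induction i with
        | zero => simp
        | succ i ihi =>
            intro n
            rw [Function.iterate_succ_apply']
            exact le_trans (ihi n) (hle _)
      have hplen : (phase c t l).1.length ≤ F1 l.length := phase_len c hc hwt
      rw [process] at hk
      simp only [List.mem_cons] at hk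
      have hit : F1^[(t :: ts).length] l.length = F1^[ts.length] (F1 l.length) := by
        simp [Function.iterate_succ_apply]
      rcases hk with rfl | hk
      · calc (phase c t l).2 ≤ l.length := phase_snd_le c t l
          _ ≤ F1 l.length := hle _
          _ ≤ F1^[ts.length] (F1 l.length) := hleiter _ _
          _ = F1^[(t :: ts).length] l.length := hit.symm
      · calc k ≤ F1^[ts.length] (phase c t l).1.length :=
              ih (phase c t l).1 (phase_wt c hwt) k hk
          _ ≤ F1^[ts.length] (F1 l.length) := hitermono _ hplen
          _ = F1^[(t :: ts).length] l.length := hit.symm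

lemma iter_closed (hc : 1 ≤ c) (i n : ℕ) :
    (fun m => (m + c + 2) ^ (c+1))^[i] n + c + 2 ≤ (n + c + 2) ^ ((c+2) ^ i) := by
  induction i with
  | zero => simp
  | succ i ih =>
      set F1 : ℕ → ℕ := fun m => (m + c + 2) ^ (c+1) with hF1
      set A := (n + c + 2) ^ ((c+2) ^ i) with hA
      have hA2 : 2 ≤ A := by
        have : 2 ≤ n + c + 2 := by omega
        calc 2 ≤ n + c + 2 := this
          _ = (n + c + 2)^1 := (pow_one _).symm
          _ ≤ A := Nat.pow_le_pow_right (by omega) (Nat.one_le_pow _ _ (by omega))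
      have step : F1^[i+1] n + c + 2 = (F1^[i] n + c + 2) ^ (c+1) + c + 2 := by
        rw [Function.iterate_succ_apply']
      rw [step]
      calc (F1^[i] n + c + 2) ^ (c+1) + c + 2
          ≤ A ^ (c+1) + A := by
            have h1 : (F1^[i] n + c + 2) ^ (c+1) ≤ A ^ (c+1) := Nat.pow_le_pow_left ih _
            have h2 : c + 2 ≤ F1^[i] n + c + 2 := by omega
            have h3 : c + 2 ≤ A := le_trans h2 ih
            omega
        _ ≤ A ^ (c+1) + A ^ (c+1) := by
            have : A ≤ A ^ (c+1) := by
              calc A = A ^ 1 := (pow_one _).symm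
                _ ≤ A ^ (c+1) := Nat.pow_le_pow_right (by omega) (by omega)
            omega
        _ = 2 * A ^ (c+1) := by ring
        _ ≤ A * A ^ (c+1) := Nat.mul_le_mul_right _ hA2
        _ = A ^ (c+2) := by rw [← pow_succ']
        _ = (n + c + 2) ^ ((c+2) ^ i * (c+2)) := by rw [hA, ← pow_mul]
        _ = (n + c + 2) ^ ((c+2) ^ (i+1)) := by rw [← pow_succ]

end Machinery




section Alphabet

variable {α : Type*} [DecidableEq α] [Fintype α]

def listProd : List (FC α) → List (FC α) → List (FC α)
  | [], _ => []
  | x :: xs, ys => ys.map (comm x) ++ listProd xs ys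

lemma mem_listProd {x y : FC α} :
    ∀ {xs ys : List (FC α)}, x ∈ xs → y ∈ ys → comm x y ∈ listProd xs ys := by
  intro xs
  induction xs with
  | nil => simp
  | cons a xs ih =>
      intro ys hx hy
      rw [listProd, List.mem_append]
      rcases List.mem_cons.mp hx with rfl | hx
      · exact Or.inl (List.mem_map_of_mem hy)
      · exact Or.inr (ih hx hy)

lemma listProd_mem :
    ∀ (xs ys : List (FC α)), ∀ z ∈ listProd xs ys, ∃ x ∈ xs, ∃ y ∈ ys, z = comm x y := by
  intro xs
  induction xs with
  | nil => simp [listProd]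
  | cons a xs ih =>
      intro ys z hz
      rw [listProd, List.mem_append] at hz
      rcases hz with hz | hz
      · obtain ⟨y, hy, rfl⟩ := List.mem_map.mp hz
        exact ⟨a, List.mem_cons_self .., y, hy, rfl⟩
      · obtain ⟨x, hx, y, hy, rfl⟩ := ih ys z hz
        exact ⟨x, List.mem_cons_of_mem _ hx, y, hy, rfl⟩

noncomputable def allLe : ℕ → List (FC α)
  | 0 => []
  | n + 1 =>
      allLe n ++
        (if n = 0 then (Finset.univ : Finset α).toList.map of
         else (listProd (allLe n) (allLe n)).filter (fun z => decide (z.wt = n + 1)))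

lemma allLe_wt : ∀ n, ∀ z ∈ (allLe (α := α) n), z.wt ≤ n := by
  intro n
  induction n with
  | zero => simp [allLe]
  | succ n ih =>
      intro z hz
      rw [allLe, List.mem_append] at hz
      rcases hz with hz | hz
      · exact le_trans (ih z hz) (by omega)
      · split_ifs at hz with h
        · obtain ⟨a, _, rfl⟩ := List.mem_map.mp hz
          simp [wt]
        · have := (List.mem_filter.mp hz).2
          simp only [decide_eq_true_eq] at this
          omega

lemma allLe_complete : ∀ (n : ℕ) (z : FC α), z.wt ≤ n → z ∈ allLe n := by
  intro n
  induction n with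
  | zero => intro z hz; have := z.wt_pos; omega
  | succ n ih =>
      intro z hz
      rcases le_or_gt z.wt n with h | h
      · exact List.mem_append_left _ (ih z h)
      · have hzw : z.wt = n + 1 := by omega
        apply List.mem_append_right
        cases z with
        | of a =>
            have hn : n = 0 := by simpa [wt] using hzw
            subst hn
            simp only [if_pos rfl]
            exact List.mem_map_of_mem (Finset.mem_toList.mpr (Finset.mem_univ a))
        | comm x y =>
            have hn : n ≠ 0 := by
              have hx := x.wt_pos
              have hy := y.wt_pos
              simp only [wt] at hzw
              omega
            simp only [if_neg hn]
            apply List.mem_filter.mpr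
            refine ⟨?_, by simp [hzw]⟩
            have hxw : x.wt ≤ n := by
              simp only [wt] at hzw
              have := le_max_left x.wt y.wt
              omega
            have hyw : y.wt ≤ n := by
              simp only [wt] at hzw
              have := le_max_right x.wt y.wt
              omega
            exact mem_listProd (ih x hxw) (ih y hyw)

lemma pairwise_of_all {β : Type*} {r : β → β → Prop} :
    ∀ {l : List β}, (∀ a ∈ l, ∀ b ∈ l, r a b) → l.Pairwise r := by
  intro l
  induction l with
  | nil => simp
  | cons a l ih =>
      intro h
      rw [List.pairwise_cons]
      exact ⟨fun b hb => h a (List.mem_cons_self ..) b (List.mem_cons_of_mem _ hb),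
        ih fun x hx y hy => h x (List.mem_cons_of_mem _ hx) y (List.mem_cons_of_mem _ hy)⟩

lemma allLe_sorted : ∀ n, List.Pairwise (fun a b : FC α => a.wt ≤ b.wt) (allLe n) := by
  intro n
  induction n with
  | zero => simp [allLe]
  | succ n ih =>
      rw [allLe]
      apply List.pairwise_append.mpr
      refine ⟨ih, ?_, ?_⟩
      · split_ifs with h
        · apply pairwise_of_all
          intro a ha b hb
          obtain ⟨x, _, rfl⟩ := List.mem_map.mp ha
          obtain ⟨y, _, rfl⟩ := List.mem_map.mp hb
          simp [wt]
        · apply pairwise_of_all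
          intro a ha b hb
          have h1 := (List.mem_filter.mp ha).2
          have h2 := (List.mem_filter.mp hb).2
          simp only [decide_eq_true_eq] at h1 h2
          omega
      · intro a ha b hb
        have h1 : a.wt ≤ n := allLe_wt n a ha
        split_ifs at hb with h
        · subst h
          have := a.wt_pos
          omega
        · have h2 := (List.mem_filter.mp hb).2
          simp only [decide_eq_true_eq] at h2
          omega

lemma good_allLe (c : ℕ) : Good c (allLe (α := α) c) := by
  apply good_of_sorted c _ (allLe_sorted c)
  intro z h1 _
  exact allLe_complete c z h1

end Alphabet

section Core

variable {α : Type*} {G : Type*} [Group G] [DecidableEq α] [Fintype α]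

lemma exists_fc_list (f : α → G) :
    ∀ l : List G, (∀ x ∈ l, x ∈ Set.range f) →
      ∃ xs : List (FC α), xs.map (ev f) = l ∧ ∀ x ∈ xs, x.wt = 1 := by
  intro l
  induction l with
  | nil => exact fun _ => ⟨[], by simp⟩
  | cons g l ih =>
      intro h
      obtain ⟨xs, hmap, hwt⟩ := ih fun x hx => h x (List.mem_cons_of_mem _ hx)
      obtain ⟨a, ha⟩ := h g (List.mem_cons_self ..)
      refine ⟨of a :: xs, by simp [ev, ha, hmap], ?_⟩
      intro x hx
      rcases List.mem_cons.mp hx with rfl | hx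
      · simp [wt]
      · exact hwt x hx

theorem core (c : ℕ) (hc : 1 ≤ c) (hbot : (⊤ : Subgroup G).lowerCentralSeries c = ⊥) (f : α → G) :
    ∃ (N E : ℕ) (P : List ℕ → G),
      ∀ (R : ℕ) (l : List G), (∀ x ∈ l, x ∈ Set.range f) → l.length ≤ R →
        ∃ ks : List ℕ, ks.length = N ∧ (∀ k ∈ ks, k ≤ (R + c + 2) ^ E) ∧ l.prod = P ks := by
  classical
  set W : List (FC α) := allLe c with hW
  refine ⟨W.length, (c+2) ^ W.length, fun ks => piRec f W ks, ?_⟩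
  intro R l hl hlen
  obtain ⟨xs, hmap, hwt1⟩ := exists_fc_list f l hl
  have hwtc : ∀ z ∈ xs, z.wt ≤ c := fun z hz => by rw [hwt1 z hz]; exact hc
  have hxslen : xs.length = l.length := by rw [← hmap, List.length_map]
  refine ⟨(process c W xs).2, process_ks_length c W xs, ?_, ?_⟩
  · intro k hk
    have h1 := process_bound c hc W xs hwtc k hk
    have h2 : (fun n => (n + c + 2) ^ (c+1))^[W.length] xs.length ≤
        (fun n => (n + c + 2) ^ (c+1))^[W.length] R := by
      have hmono : Monotone (fun n => (n + c + 2) ^ (c+1)) := fun a b hab =>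
        Nat.pow_le_pow_left (by omega) _
      exact hmono.iterate W.length (by omega)
    have h3 := iter_closed c hc W.length R
    omega
  · have hclean : (process c W xs).1 = [] := by
      apply process_clean c W xs (good_allLe c)
      · intro z hz
        exact allLe_complete c z (hwtc z hz)
      · exact hwtc
    have hprod := process_prod c (f := f) hbot W xs
    rw [hclean] at hprod
    simp only [List.map_nil, List.prod_nil, one_mul] at hprod
    rw [← hmap]
    exact hprod.symm

end Core

end PolyGrowth


def wordBall {G : Type*} [Group G] (S : Set G) (R : ℕ) : Set G :=
  {g | ∃ l : List G, (∀ x ∈ l, x ∈ S) ∧ l.length ≤ R ∧ l.prod = g}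

open PolyGrowth

/-- A finitely generated virtually nilpotent group has at most polynomial growth. -/
theorem polynomial_growth_of_virtually_nilpotent {Γ : Type*} [Group Γ]
    (H : Subgroup Γ) (hfi : H.FiniteIndex) (hnil : Group.IsNilpotent H)
    (S : Set Γ) (hfin : S.Finite) (hsym : ∀ x ∈ S, x⁻¹ ∈ S)
    (hgen : Subgroup.closure S = ⊤) :
    ∃ C m : ℕ, ∀ R : ℕ, 1 ≤ R → Nat.card (wordBall S R) ≤ C * R ^ m := by
  classical
  obtain ⟨n₀, hn₀⟩ := nilpotent_iff_lowerCentralSeries.mp hnil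
  set c := n₀ + 1 with hcdef
  have hc : 1 ≤ c := by omega
  have hbot : (⊤ : Subgroup ↥H).lowerCentralSeries c = ⊥ := by
    have h1 : (⊤ : Subgroup ↥H).lowerCentralSeries c ≤ (⊤ : Subgroup ↥H).lowerCentralSeries n₀ :=
      lowerCentralSeries_antitone _ (Nat.le_succ _)
    rw [hn₀] at h1
    exact le_bot_iff.mp h1
  haveI : H.FiniteIndex := hfi
  haveI : Finite (Γ ⧸ H) := H.finite_quotient_of_finiteIndex
  haveI : Fintype (Γ ⧸ H) := Fintype.ofFinite _
  -- the transversal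
  set σ : Γ ⧸ H → Γ := fun q => if q = QuotientGroup.mk 1 then 1 else q.out with hσdef
  have hσ : ∀ q, QuotientGroup.mk (σ q) = q := by
    intro q
    by_cases h : q = QuotientGroup.mk 1
    · simp [hσdef, h]
    · simp only [hσdef, if_neg h]
      exact QuotientGroup.out_eq' q
  have hσ1 : σ (QuotientGroup.mk 1) = 1 := by rw [hσdef]; simp
  -- the alphabet
  set A := (Γ ⧸ H) × {x : Γ // x ∈ hfin.toFinset} with hAdef
  have hmemH : ∀ (q : Γ ⧸ H) (s : Γ), (σ ((s : Γ) • q))⁻¹ * s * σ q ∈ H := by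
    intro q s
    have h1 : (QuotientGroup.mk (σ (s • q)) : Γ ⧸ H) = QuotientGroup.mk (s * σ q) := by
      calc (QuotientGroup.mk (σ (s • q)) : Γ ⧸ H) = s • q := hσ _
        _ = s • (QuotientGroup.mk (σ q) : Γ ⧸ H) := by rw [hσ]
        _ = QuotientGroup.mk (s • σ q) := MulAction.Quotient.smul_mk H s (σ q)
        _ = QuotientGroup.mk (s * σ q) := by rw [smul_eq_mul]
    have h2 := QuotientGroup.eq.mp h1
    rwa [← mul_assoc] at h2
  set f : A → ↥H := fun p => ⟨(σ ((p.2 : Γ) • p.1))⁻¹ * (p.2 : Γ) * σ p.1,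
    hmemH p.1 (p.2 : Γ)⟩ with hfdef
  obtain ⟨N, E, P, hcore⟩ := core (G := ↥H) (α := A) c hc hbot f
  -- decomposition of words
  have hdec : ∀ l : List Γ, (∀ x ∈ l, x ∈ S) →
      ∃ lh : List ↥H, lh.length = l.length ∧ (∀ z ∈ lh, z ∈ Set.range f) ∧
        l.prod = σ (QuotientGroup.mk l.prod) * (lh.prod : Γ) := by
    intro l
    induction l with
    | nil =>
        intro _
        refine ⟨[], rfl, by simp, ?_⟩
        simp [hσ1]
    | cons s l ih =>
        intro hmem
        obtain ⟨lh, hlen, hrange, hprod⟩ := ih fun x hx => hmem x (List.mem_cons_of_mem _ hx)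
        have hsS : s ∈ S := hmem s (List.mem_cons_self ..)
        set q : Γ ⧸ H := QuotientGroup.mk l.prod with hq
        set p : A := (q, ⟨s, hfin.mem_toFinset.mpr hsS⟩) with hp
        refine ⟨f p :: lh, by simp [hlen], ?_, ?_⟩
        · intro z hz
          rcases List.mem_cons.mp hz with rfl | hz
          · exact ⟨p, rfl⟩
          · exact hrange z hz
        · have hcoe : ((f p :: lh).prod : Γ) = (f p : Γ) * (lh.prod : Γ) := by
            rw [List.prod_cons]
            exact Subgroup.coe_mul _ _ _
          rw [List.prod_cons, hcoe]
          have hfp : (f p : Γ) = (σ (s • q))⁻¹ * s * σ q := rfl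
          have hmk : QuotientGroup.mk (s * l.prod) = s • q := by
            rw [hq]
            exact (MulAction.Quotient.smul_mk H s l.prod).symm
          rw [hmk, hfp, hprod]
          group
  -- counting
  refine ⟨H.index * (2 * (c + 3) ^ E) ^ N, E * N, ?_⟩
  intro R hR
  set K := (R + c + 2) ^ E with hK
  set Ψ : (Γ ⧸ H) × (Fin N → Fin (K + 1)) → Γ :=
    fun qv => σ qv.1 * ((P (List.ofFn fun i => ((qv.2 i : ℕ)))) : Γ) with hΨ
  have hsub : wordBall S R ⊆ Set.range Ψ := by
    intro g hg
    obtain ⟨l, hlS, hllen, hlprod⟩ := hg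
    obtain ⟨lh, hlen, hrange, hprod⟩ := hdec l hlS
    obtain ⟨ks, hkslen, hksbd, hksprod⟩ := hcore R lh hrange (by omega)
    have hlt : ∀ i : Fin N, (i : ℕ) < ks.length := fun i => by
      rw [hkslen]; exact i.isLt
    have hv : ∀ i : Fin N, ks[(i : ℕ)]'(hlt i) < K + 1 := by
      intro i
      have := hksbd _ (List.getElem_mem (hlt i))
      omega
    refine ⟨⟨QuotientGroup.mk l.prod, fun i => ⟨ks[(i : ℕ)]'(hlt i), hv i⟩⟩, ?_⟩
    have hofn : (List.ofFn fun i : Fin N =>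
        ((⟨ks[(i : ℕ)]'(hlt i), hv i⟩ : Fin (K+1)) : ℕ)) = ks := by
      apply List.ext_getElem
      · simp [hkslen]
      · intro j h1 h2
        simp [List.getElem_ofFn]
    rw [hΨ]
    simp only [hofn]
    rw [← hksprod, ← hprod, hlprod]
  have h1 : Nat.card (wordBall S R) ≤ Nat.card (Set.range Ψ) :=
    Nat.card_mono (Set.finite_range Ψ) hsub
  have h2 : Nat.card (Set.range Ψ) ≤ Nat.card ((Γ ⧸ H) × (Fin N → Fin (K + 1))) :=
    Nat.card_le_card_of_surjective (Set.rangeFactorization Ψ) Set.rangeFactorization_surjective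
  have h3 : Nat.card ((Γ ⧸ H) × (Fin N → Fin (K + 1))) = H.index * (K + 1) ^ N := by
    rw [Nat.card_prod, Nat.card_fun]
    simp [Subgroup.index_eq_card, Nat.card_eq_fintype_card]
  have h4 : (K + 1) ^ N ≤ (2 * (c + 3) ^ E) ^ N * R ^ (E * N) := by
    have hK1 : 1 ≤ K := Nat.one_le_pow _ _ (by omega)
    have hKle : K ≤ (c + 3) ^ E * R ^ E := by
      calc K = (R + c + 2) ^ E := hK
        _ ≤ ((c + 3) * R) ^ E := by
            apply Nat.pow_le_pow_left
            nlinarith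
        _ = (c + 3) ^ E * R ^ E := by rw [mul_pow]
    calc (K + 1) ^ N ≤ (2 * ((c + 3) ^ E * R ^ E)) ^ N := by
          apply Nat.pow_le_pow_left
          omega
      _ = (2 * (c + 3) ^ E) ^ N * R ^ (E * N) := by ring
  calc Nat.card (wordBall S R) ≤ H.index * (K + 1) ^ N :=
        le_trans h1 (le_trans h2 (le_of_eq h3))
    _ ≤ H.index * ((2 * (c + 3) ^ E) ^ N * R ^ (E * N)) :=
        Nat.mul_le_mul_left _ h4
    _ = H.index * (2 * (c + 3) ^ E) ^ N * R ^ (E * N) := by ring
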